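/- arXiv:1701.06949 — 3 statements merged into one kernel-verified Lean document; each statement's English description precedes it below -/
import Mathlib

section
/- Let G be a finite group and V an abelian normal 2-subgroup of G with C_G(V) ≤ V. If α is an automorphism of G with [V,α] = 1 (i.e. α fixes V pointwise) and α² inner, then [G,α] ≤ V, i.e. α(g)g⁻¹ ∈ V for all g ∈ G. -/
/-- Let `G` be a finite group and `V` an abelian normal 2-subgroup of `G`
with `C_G(V) ≤ V`. If `α` is an automorphism of `G` fixing `V` pointwise such that `α²`
is inner, then `[G, α] ≤ V`, i.e. `α g * g⁻¹ ∈ V` for all `g ∈ G`. -/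
theorem stmt0 {G : Type*} [Group G] [Finite G] (V : Subgroup G)
    (hVab : IsMulCommutative V) (hVnorm : V.Normal) (hV2 : IsPGroup 2 V)
    (hCent : Subgroup.centralizer (V : Set G) ≤ V)
    (α : MulAut G) (hfix : ∀ v ∈ V, α v = v)
    (hinner : ∃ u : G, α ^ 2 = MulAut.conj u) :
    ∀ g : G, α g * g⁻¹ ∈ V := by
  intro g
  have hc : g⁻¹ * α g ∈ Subgroup.centralizer (V : Set G) := by
    rw [Subgroup.mem_centralizer_iff]
    intro v hv
    have h1 : α (g * v * g⁻¹) = g * v * g⁻¹ := hfix _ (hVnorm.conj_mem v hv g)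
    have h2 : α g * v * (α g)⁻¹ = g * v * g⁻¹ := by
      simpa [map_mul, hfix v hv] using h1
    have h3 : α g * v = g * v * g⁻¹ * α g := by
      rw [← h2]; group
    calc v * (g⁻¹ * α g) = g⁻¹ * (g * v * g⁻¹ * α g) := by group
      _ = g⁻¹ * (α g * v) := by rw [← h3]
      _ = (g⁻¹ * α g) * v := by group
  have hVmem : g⁻¹ * α g ∈ V := hCent hc
  have := hVnorm.conj_mem _ hVmem g
  simpa [mul_assoc] using this
end

section
/- In the setting of the previous lemma's proof: if G is a finite group, V an abelian normal 2-subgroup with C_G(V) ≤ V, α an automorphism of G fixing V pointwise with α² = conjugation by some u ∈ V, then in the semidirect product G* = G ⋊ ⟨α⟩, the subgroup W = V⟨α⟩ is an abelian normal subgroup of G* with [W, G*] ≤ V. -/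
open SemidirectProduct

/-- `G` finite, `V` an abelian normal 2-subgroup with `C_G(V) ≤ V`,
`α` an automorphism of `G` fixing `V` pointwise with `α² = c_u` for some `u ∈ V`.
Then in the semidirect product `G* = G ⋊ ⟨α⟩`, the subgroup `W = V⟨α⟩` is an abelian
normal subgroup of `G*` with `[W, G*] ≤ V` (identifying `V` with its image in `G*`). -/
theorem stmt2 {G : Type*} [Group G] [Finite G] (V : Subgroup G)
    (hVab : IsMulCommutative V) (hVnorm : V.Normal) (hV2 : IsPGroup 2 V)
    (hCent : Subgroup.centralizer (V : Set G) ≤ V)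
    (α : MulAut G) (hfix : ∀ v ∈ V, α v = v)
    (u : G) (hu : u ∈ V) (hα2 : α ^ 2 = MulAut.conj u) :
    letI Gstar := G ⋊[(Subgroup.zpowers α).subtype] ↥(Subgroup.zpowers α)
    ∀ W : Subgroup Gstar,
      W = Subgroup.closure
          ((inl '' (V : Set G)) ∪ {inr ⟨α, Subgroup.mem_zpowers α⟩}) →
      IsMulCommutative W ∧ W.Normal ∧
        ⁅W, (⊤ : Subgroup Gstar)⁆ ≤ V.map inl := by
  intro W hW
  set a : ↥(Subgroup.zpowers α) := ⟨α, Subgroup.mem_zpowers α⟩ with ha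
  set S : Set (G ⋊[(Subgroup.zpowers α).subtype] ↥(Subgroup.zpowers α)) := (inl '' (V : Set G)) ∪ {inr a} with hS
  -- every power of α fixes V pointwise
  have hfixinv : ∀ v ∈ V, (α⁻¹ : MulAut G) v = v := by
    intro v hv
    have h : (α⁻¹ : MulAut G) (α v) = v := MulAut.inv_apply_self G α v
    rwa [hfix v hv] at h
  have hfixz : ∀ β : ↥(Subgroup.zpowers α), ∀ v ∈ V, (β : MulAut G) v = v := by
    have hle : Subgroup.zpowers α ≤
      { carrier := {β : MulAut G | ∀ v ∈ V, β v = v}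
        one_mem' := fun v _ => rfl
        mul_mem' := fun {b c} hb hc v hv => by
          rw [MulAut.mul_apply, hc v hv, hb v hv]
        inv_mem' := fun {b} hb v hv => by
          have h : b⁻¹ (b v) = v := MulAut.inv_apply_self G b v
          rwa [hb v hv] at h } := Subgroup.zpowers_le.mpr hfix
    exact fun β => hle (SetLike.coe_mem β)
  -- key fact: g⁻¹ * α g ∈ V for all g
  have hconj : ∀ g : G, g⁻¹ * α g ∈ V := by
    intro g
    apply hCent
    rw [Subgroup.mem_centralizer_iff]
    intro v hv
    have h1 : g * v * g⁻¹ ∈ V := hVnorm.conj_mem v hv g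
    have h2 : α (g * v * g⁻¹) = g * v * g⁻¹ := hfix _ h1
    rw [map_mul, map_mul, hfix v hv, map_inv] at h2
    have h3 : α g * v = g * v * g⁻¹ * α g := by
      rw [← h2]; group
    calc v * (g⁻¹ * α g) = g⁻¹ * (g * v * g⁻¹ * α g) := by group
      _ = g⁻¹ * (α g * v) := by rw [← h3]
      _ = g⁻¹ * α g * v := by group
  have hconj2 : ∀ g : G, g * (α g)⁻¹ ∈ V := by
    intro g
    have h := hVnorm.conj_mem _ (V.inv_mem (hconj g)) g
    have e : g * (g⁻¹ * α g)⁻¹ * g⁻¹ = g * (α g)⁻¹ := by group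
    rwa [e] at h
  have hconj3 : ∀ g : G, ((α⁻¹ : MulAut G) g)⁻¹ * g ∈ V := by
    intro g
    have h := hconj ((α⁻¹ : MulAut G) g)
    rwa [MulAut.apply_inv_self] at h
  -- membership criterion for N = V.map inl
  have memN : ∀ z : (G ⋊[(Subgroup.zpowers α).subtype] ↥(Subgroup.zpowers α)), z.left ∈ V → z.right = 1 → z ∈ V.map inl := by
    rintro ⟨l, r⟩ hl hr
    dsimp at hl hr
    subst hr
    exact ⟨l, hl, rfl⟩
  -- commutation of generators
  have hcommz : ∀ β γ : ↥(Subgroup.zpowers α), β * γ = γ * β := fun β γ =>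
    Subtype.ext (Subgroup.mul_comm_of_mem_isMulCommutative (H := Subgroup.zpowers α)
      (SetLike.coe_mem β) (SetLike.coe_mem γ))
  have hvc : ∀ v ∈ V, (inl v : (G ⋊[(Subgroup.zpowers α).subtype] ↥(Subgroup.zpowers α))) * inr a = inr a * inl v := by
    intro v hv
    apply SemidirectProduct.ext <;>
      simp [hfix v hv, ha]
  -- N is normal
  have hNnorm : (V.map inl : Subgroup (G ⋊[(Subgroup.zpowers α).subtype] ↥(Subgroup.zpowers α))).Normal := by
    constructor
    rintro n ⟨v, hv, rfl⟩ g
    refine memN _ ?_ ?_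
    · have h1 : ((Subgroup.zpowers α).subtype g.right) v = v := hfixz g.right v hv
      simp only [SemidirectProduct.mul_left, SemidirectProduct.mul_right,
        SemidirectProduct.inv_left, SemidirectProduct.inv_right,
        SemidirectProduct.left_inl, SemidirectProduct.right_inl,
        map_inv, mul_one, h1]
      rw [MulAut.apply_inv_self]
      exact hVnorm.conj_mem v hv g.left
    · simp
  haveI := hNnorm
  -- membership helpers for W
  have hNle : V.map inl ≤ Subgroup.closure S := by
    rintro _ ⟨v, hv, rfl⟩
    exact Subgroup.subset_closure (Or.inl ⟨v, hv, rfl⟩)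
  have memW : ∀ z : (G ⋊[(Subgroup.zpowers α).subtype] ↥(Subgroup.zpowers α)),
      z.left ∈ V → z.right = a → z ∈ Subgroup.closure S := by
    intro z hl hr
    rw [← SemidirectProduct.inl_left_mul_inr_right z, hr]
    exact mul_mem (Subgroup.subset_closure (Or.inl ⟨z.left, hl, rfl⟩))
      (Subgroup.subset_closure (Or.inr rfl))
  subst hW
  refine ⟨?_, ?_, ?_⟩
  · -- commutativity
    constructor
    constructor
    intro x y
    apply Subtype.ext
    rw [Subgroup.coe_mul, Subgroup.coe_mul]
    refine Subgroup.closure_induction₂ ?_ ?_ ?_ ?_ ?_ ?_ ?_ x.2 y.2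
    · intro s t hs ht
      rcases hs with ⟨v, hv, rfl⟩ | hs
      · rcases ht with ⟨v', hv', rfl⟩ | ht
        · rw [← map_mul, ← map_mul,
            Subgroup.mul_comm_of_mem_isMulCommutative (H := V) hv hv']
        · rw [Set.mem_singleton_iff] at ht; subst ht
          exact hvc v hv
      · rw [Set.mem_singleton_iff] at hs; subst hs
        rcases ht with ⟨v', hv', rfl⟩ | ht
        · exact (hvc v' hv').symm
        · rw [Set.mem_singleton_iff] at ht; subst ht; rfl
    · intro x _; rw [one_mul, mul_one]
    · intro x _; rw [one_mul, mul_one]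
    · intro x y z _ _ _ h1 h2
      exact Commute.mul_left h1 h2
    · intro y z x _ _ _ h1 h2
      exact Commute.mul_right h1 h2
    · intro x y _ _ h
      exact Commute.inv_left h
    · intro x y _ _ h
      exact Commute.inv_right h
  · -- normality
    constructor
    intro w hw g
    refine Subgroup.closure_induction ?_ ?_ ?_ ?_ hw
    · rintro s hs
      rcases hs with ⟨v, hv, rfl⟩ | hs
      · exact hNle (hNnorm.conj_mem _ ⟨v, hv, rfl⟩ g)
      · rw [Set.mem_singleton_iff] at hs; subst hs
        refine memW _ ?_ ?_
        · simp only [SemidirectProduct.mul_left, SemidirectProduct.mul_right,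
            SemidirectProduct.inv_left, SemidirectProduct.inv_right,
            SemidirectProduct.left_inr, SemidirectProduct.right_inr,
            map_inv, map_mul, map_one, mul_one, one_mul]
          have h1 : g.right * a * g.right⁻¹ = a := by
            rw [hcommz g.right a, mul_inv_cancel_right]
          have h2 : ((Subgroup.zpowers α).subtype g.right) *
              ((Subgroup.zpowers α).subtype a) * ((Subgroup.zpowers α).subtype g.right)⁻¹
              = (Subgroup.zpowers α).subtype a := by
            rw [← map_inv, ← map_mul, ← map_mul, h1]
          rw [← MulAut.mul_apply, h2]
          exact hconj2 g.left
        · simp only [SemidirectProduct.mul_right, SemidirectProduct.inv_right,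
            SemidirectProduct.right_inr]
          rw [hcommz g.right a, mul_inv_cancel_right]
    · simpa using (Subgroup.closure S).one_mem
    · intro x y _ _ h1 h2
      have e : g * (x * y) * g⁻¹ = (g * x * g⁻¹) * (g * y * g⁻¹) := by group
      rw [e]; exact mul_mem h1 h2
    · intro x _ h1
      have e : g * x⁻¹ * g⁻¹ = (g * x * g⁻¹)⁻¹ := by group
      rw [e]; exact inv_mem h1
  · -- commutator condition
    rw [Subgroup.commutator_le]
    intro w hw x _
    have hle : Subgroup.closure S ≤
        (Subgroup.center (_ ⧸ (V.map inl))).comap (QuotientGroup.mk' (V.map inl)) := by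
      rw [Subgroup.closure_le]
      rintro s hs
      rw [SetLike.mem_coe, Subgroup.mem_comap, Subgroup.mem_center_iff]
      intro q
      induction q using QuotientGroup.induction_on with
      | _ x =>
      rw [QuotientGroup.mk'_apply, ← QuotientGroup.mk_mul, ← QuotientGroup.mk_mul,
        QuotientGroup.eq]
      rcases hs with ⟨v, hv, rfl⟩ | hs
      · have e : (x * inl v)⁻¹ * (inl v * x) = (inl v)⁻¹ * (x⁻¹ * inl v * (x⁻¹)⁻¹) := by
          group
        rw [e]
        exact mul_mem (inv_mem ⟨v, hv, rfl⟩) (hNnorm.conj_mem _ ⟨v, hv, rfl⟩ x⁻¹)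
      · rw [Set.mem_singleton_iff] at hs; subst hs
        refine memN _ ?_ ?_
        · simp only [SemidirectProduct.mul_left, SemidirectProduct.mul_right,
            SemidirectProduct.inv_left, SemidirectProduct.inv_right,
            SemidirectProduct.left_inr, SemidirectProduct.right_inr,
            map_inv, map_mul, map_one, mul_one, one_mul]
          have hC : (((Subgroup.zpowers α).subtype x.right) *
              ((Subgroup.zpowers α).subtype a))⁻¹
              = (Subgroup.zpowers α).subtype ((x.right * a)⁻¹) := by
            rw [map_inv, map_mul]
          rw [hC, ← map_inv, ← map_mul]
          have hA : ((Subgroup.zpowers α).subtype a) x.left = α x.left := rfl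
          rw [hA]
          have hfixz' : ∀ β : ↥(Subgroup.zpowers α), ∀ v ∈ V,
              ((Subgroup.zpowers α).subtype β) v = v := hfixz
          rw [hfixz' ((x.right * a)⁻¹) _ (hconj x.left)]
          exact hconj x.left
        · simp only [SemidirectProduct.mul_right, SemidirectProduct.inv_right,
            SemidirectProduct.right_inr]
          rw [hcommz a x.right, inv_mul_cancel]
    have hw' := hle hw
    rw [Subgroup.mem_comap, Subgroup.mem_center_iff] at hw'
    have h := hw' (QuotientGroup.mk' (V.map inl) x)
    rw [← QuotientGroup.ker_mk' (V.map inl), MonoidHom.mem_ker, map_commutatorElement]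
    exact commutatorElement_eq_one_iff_commute.mpr h.symm
end

section
/- Let F be a saturated fusion system over a finite p-group S and F₀ a weakly normal subsystem over S₀ ≤ S. If O^p(Aut_F(S₀)) ≤ Aut_{F₀}(S₀), then O^p(Aut_F(P)) ≤ Aut_{F₀}(P) for every P ≤ S₀; equivalently, Aut_F(P)/Aut_{F₀}(P) is a p-group for all P ≤ S₀. -/
/-!
A formalization of saturated fusion systems sufficient for Lemma 4.1 of the paper.
A fusion system over a subgroup `S₀` of a finite `p`-group `S` is recorded by giving,
for each `P ≤ S`, the set of morphisms out of `P`, viewed as injective group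
homomorphisms `↥P →* S` (the codomain of such a morphism being any subgroup
containing its range).
-/


open Pointwise

section GenericHelpers

/-- If conjugation by `u` maps `P` into `P`, and the ambient group is finite,
then `u` normalizes `P`. -/
lemma mem_normalizer_of_conj_mem {G : Type*} [Group G] [Finite G] (P : Subgroup G)
    (u : G) (hsub : ∀ y ∈ P, u * y * u⁻¹ ∈ P) : u ∈ Subgroup.normalizer (P : Set G) := by
  have hinj : Function.Injective (fun y : ↥P => (⟨u * y * u⁻¹, hsub y y.2⟩ : ↥P)) := by
    intro a b hab
    have h1 : u * (a : G) * u⁻¹ = u * (b : G) * u⁻¹ := congrArg (fun z : ↥P => (z : G)) hab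
    exact Subtype.ext (mul_left_cancel (mul_right_cancel h1))
  have hsurj := Finite.surjective_of_injective hinj
  rw [Subgroup.mem_normalizer_iff]
  intro h
  constructor
  · exact fun hh => hsub h hh
  · intro hh
    obtain ⟨y, hy⟩ := hsurj ⟨u * h * u⁻¹, hh⟩
    have h1 : u * (y : G) * u⁻¹ = u * h * u⁻¹ := congrArg (fun z : ↥P => (z : G)) hy
    have h2 : (y : G) = h := mul_left_cancel (mul_right_cancel h1)
    exact h2 ▸ y.2

/-- A `p`-subgroup whose index is prime to `p` is a Sylow `p`-subgroup. -/
def toSylow {G : Type*} [Group G] [Finite G] {p : ℕ} [Fact p.Prime] (U : Subgroup G)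
    (hU : IsPGroup p U) (hidx : ¬ p ∣ U.index) : Sylow p G where
  toSubgroup := U
  isPGroup' := hU
  is_maximal' := by
    intro Q hQ hUQ
    have hrel : U.relIndex Q * Q.index = U.index := Subgroup.relIndex_mul_index hUQ
    have hdvd : U.relIndex Q ∣ U.index := ⟨Q.index, hrel.symm⟩
    have hrelcard : U.relIndex Q ∣ Nat.card Q := Subgroup.index_dvd_card (U.subgroupOf Q)
    obtain ⟨n, hn⟩ := hQ.exists_card_eq
    obtain ⟨m, -, hm⟩ := (Nat.dvd_prime_pow (Fact.out)).mp (hn ▸ hrelcard)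
    have hm0 : m = 0 := by
      by_contra hm0
      exact hidx (dvd_trans (dvd_pow_self p hm0) (hm ▸ hdvd))
    have h1 : U.relIndex Q = 1 := by rw [hm, hm0, pow_zero]
    exact le_antisymm (Subgroup.relIndex_eq_one.mp h1) hUQ

/-- Two `p`-subgroups of a finite group with index prime to `p` are conjugate. -/
lemma sylow_conj' {H : Type*} [Group H] [Finite H] {p : ℕ} [Fact p.Prime]
    {U V : Subgroup H} (hU : IsPGroup p U) (hV : IsPGroup p V)
    (hUi : ¬ p ∣ U.index) (hVi : ¬ p ∣ V.index) :
    ∃ h : H, ∀ x : H, x ∈ U ↔ h * x * h⁻¹ ∈ V := by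
  obtain ⟨g, hg⟩ := MulAction.exists_smul_eq H (toSylow U hU hUi) (toSylow V hV hVi)
  refine ⟨g, fun x => ?_⟩
  have hg' : MulAut.conj g • U = V := congrArg (fun P : Sylow p H => (P : Subgroup H)) hg
  constructor
  · intro hx
    rw [← hg']
    exact Subgroup.smul_mem_pointwise_smul x (MulAut.conj g) U hx
  · intro hx
    rw [← hg'] at hx
    have h0 := (Subgroup.mem_pointwise_smul_iff_inv_smul_mem (a := MulAut.conj g)
      (S := U) (x := g * x * g⁻¹)).mp hx
    have hx' : g * (g⁻¹ * x * g) * g⁻¹ ∈ U := by simpa using h0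
    have heq : g * (g⁻¹ * x * g) * g⁻¹ = x := by group
    rwa [heq] at hx'

/-- Relative Sylow conjugation inside a subgroup `H`. -/
lemma sylow_conj_in {M : Type*} [Group M] [Finite M] {p : ℕ} [Fact p.Prime]
    {H U V : Subgroup M}
    (hUH : U ≤ H) (hVH : V ≤ H) (hU : IsPGroup p U) (hV : IsPGroup p V)
    (hUi : ¬ p ∣ (U.subgroupOf H).index) (hVi : ¬ p ∣ (V.subgroupOf H).index) :
    ∃ h ∈ H, ∀ x : M, x ∈ U ↔ h * x * h⁻¹ ∈ V := by
  have hU' : IsPGroup p (U.subgroupOf H) :=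
    hU.comap_of_injective H.subtype Subtype.coe_injective
  have hV' : IsPGroup p (V.subgroupOf H) :=
    hV.comap_of_injective H.subtype Subtype.coe_injective
  obtain ⟨h, hh⟩ := sylow_conj' hU' hV' hUi hVi
  refine ⟨(h : M), h.2, fun x => ?_⟩
  constructor
  · intro hx
    have := (hh ⟨x, hUH hx⟩).mp (by simpa [Subgroup.mem_subgroupOf] using hx)
    simpa [Subgroup.mem_subgroupOf] using this
  · intro hx
    by_cases hxH : x ∈ H
    · have := (hh ⟨x, hxH⟩).mpr (by simpa [Subgroup.mem_subgroupOf] using hx)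
      simpa [Subgroup.mem_subgroupOf] using this
    · exfalso
      apply hxH
      have hmem : (h : M) * x * (h : M)⁻¹ ∈ H := hVH hx
      have h2 : (h : M)⁻¹ * ((h : M) * x * (h : M)⁻¹) * (h : M) ∈ H :=
        H.mul_mem (H.mul_mem (H.inv_mem h.2) hmem) h.2
      have heq : (h : M)⁻¹ * ((h : M) * x * (h : M)⁻¹) * (h : M) = x := by group
      rwa [heq] at h2

/-- Coset decomposition of powers. -/
lemma coset_pow {M : Type*} [Group M] {A K : Subgroup M}
    (hconj : ∀ a ∈ A, ∀ k ∈ K, a * k * a⁻¹ ∈ K)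
    {α β : M} (hα : α ∈ A) (hβ : β ∈ K) (m : ℕ) :
    ∃ c ∈ K, (β * α) ^ m = c * α ^ m := by
  induction m with
  | zero => exact ⟨1, K.one_mem, by simp⟩
  | succ n ih =>
    obtain ⟨c, hc, hcEq⟩ := ih
    refine ⟨c * (α ^ n * β * (α ^ n)⁻¹), K.mul_mem hc (hconj _ (A.pow_mem hα n) _ hβ), ?_⟩
    rw [pow_succ, hcEq, pow_succ]
    group

/-- In a finite group some `p`-power of every element lies in the `p`-residual. -/
lemma exists_pow_mem_biInf {M : Type*} [Group M] [Finite M] {p : ℕ} [Fact p.Prime] (g : M)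
    (R : Subgroup M)
    (hR : R = ⨅ N ∈ {N : Subgroup M | N.Normal ∧ ∀ g : M, ∃ n : ℕ, g ^ p ^ n ∈ N}, N) :
    ∃ n : ℕ, g ^ p ^ n ∈ R := by
  set a := (orderOf g).factorization p with ha
  refine ⟨a, ?_⟩
  have hord : orderOf g ≠ 0 := (orderOf_pos g).ne'
  set h := g ^ p ^ a with hh
  have hdvd : p ^ a ∣ orderOf g := Nat.ordProj_dvd _ _
  have hordh : orderOf h = (orderOf g) / p ^ a := by
    rw [hh, orderOf_pow_of_dvd (pow_pos (Nat.Prime.pos Fact.out) a).ne' hdvd]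
  have hcop : ¬ p ∣ orderOf h := by
    rw [hordh]
    exact Nat.not_dvd_ordCompl Fact.out hord
  rw [hR]
  simp only [Subgroup.mem_iInf]
  intro N hN
  obtain ⟨hNnorm, hNpow⟩ := hN
  obtain ⟨n, hn⟩ := hNpow h
  have hcop' : Nat.Coprime (p ^ n) (orderOf h) :=
    Nat.Coprime.pow_left _ ((Nat.Prime.coprime_iff_not_dvd Fact.out).mpr hcop)
  by_cases h1 : orderOf h = 1
  · have hh1 : h = 1 := orderOf_eq_one_iff.mp h1
    rw [hh1]
    exact N.one_mem
  · have hlt : 1 < orderOf h :=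
      lt_of_le_of_ne (Nat.one_le_iff_ne_zero.mpr (orderOf_pos h).ne') (Ne.symm h1)
    obtain ⟨k, -, hk⟩ := Nat.exists_mul_mod_eq_one_of_coprime hcop' hlt
    have hfin : (h ^ p ^ n) ^ k = h := by
      rw [← pow_mul, ← pow_mod_orderOf, hk, pow_one]
    exact hfin ▸ N.pow_mem hn k

lemma card_lt_of_lt' {G : Type*} [Group G] [Finite G] {P Q : Subgroup G} (h : P < Q) :
    Nat.card P < Nat.card Q := by
  have hle : Nat.card P ≤ Nat.card Q := Subgroup.card_le_of_le h.le
  rcases lt_or_eq_of_le hle with h' | h'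
  · exact h'
  · exact absurd (Subgroup.eq_of_le_of_card_ge h.le h'.ge) h.ne

/-- In a finite `p`-group, a proper subgroup of `S₀` grows in its `S₀`-normalizer. -/
lemma lt_normalizer_inf {G : Type*} [Group G] [Finite G] {p : ℕ} [Fact p.Prime]
    (hG : IsPGroup p G) {P S₀ : Subgroup G} (hPS : P ≤ S₀) (hne : P ≠ S₀) :
    P < S₀ ⊓ Subgroup.normalizer (P : Set G) := by
  have hS₀p : IsPGroup p ↥S₀ := hG.to_subgroup S₀
  have : Group.IsNilpotent ↥S₀ := hS₀p.isNilpotent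
  have hnc : NormalizerCondition ↥S₀ := normalizerCondition_of_isNilpotent
  set P' : Subgroup ↥S₀ := P.subgroupOf S₀ with hP'
  have hP'top : P' ≠ ⊤ := by
    intro htop
    apply hne
    apply le_antisymm hPS
    intro x hx
    have : (⟨x, hx⟩ : ↥S₀) ∈ P' := htop ▸ Subgroup.mem_top _
    simpa [hP', Subgroup.mem_subgroupOf] using this
  have hlt : P' < Subgroup.normalizer (P' : Set ↥S₀) := hnc P' (lt_top_iff_ne_top.mpr hP'top)
  obtain ⟨u, hu, huP⟩ := SetLike.exists_of_lt hlt
  constructor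
  · exact le_inf hPS Subgroup.le_normalizer
  · intro hle
    apply huP
    have huN : (u : G) ∈ Subgroup.normalizer (P : Set G) := by
      rw [Subgroup.mem_normalizer_iff]
      intro h
      constructor
      · intro hh
        have h' : (⟨h, hPS hh⟩ : ↥S₀) ∈ P' := by simpa [hP', Subgroup.mem_subgroupOf] using hh
        have := (Subgroup.mem_normalizer_iff.mp hu ⟨h, hPS hh⟩).mp h'
        simpa [hP', Subgroup.mem_subgroupOf] using this
      · intro hh
        have hhS : (u : G) * h * (u : G)⁻¹ ∈ S₀ := hPS hh
        have hhS' : h ∈ S₀ := by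
          have hmm : ((u : G)⁻¹ * ((u : G) * h * (u : G)⁻¹) * (u : G)) ∈ S₀ :=
            S₀.mul_mem (S₀.mul_mem (S₀.inv_mem u.2) hhS) u.2
          have heq : (u : G)⁻¹ * ((u : G) * h * (u : G)⁻¹) * (u : G) = h := by group
          rwa [heq] at hmm
        have h2 : (u * ⟨h, hhS'⟩ * u⁻¹ : ↥S₀) ∈ P' := by
          simpa [hP', Subgroup.mem_subgroupOf] using hh
        have := (Subgroup.mem_normalizer_iff.mp hu ⟨h, hhS'⟩).mpr h2
        simpa [hP', Subgroup.mem_subgroupOf] using this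
    have : (u : G) ∈ P := hle ⟨u.2, huN⟩
    simpa [hP', Subgroup.mem_subgroupOf] using this

end GenericHelpers

/-- A fusion system over the subgroup `S₀` of the group `S`. -/
structure FusionSystemOn (S : Type*) [Group S] (S₀ : Subgroup S) where
  /-- The morphisms with source `P`. -/
  Hom : (P : Subgroup S) → Set (↥P →* S)
  /-- Morphisms exist only out of subgroups of `S₀`. -/
  dom_le : ∀ P : Subgroup S, (Hom P).Nonempty → P ≤ S₀
  /-- Morphisms take values in `S₀`. -/
  rng_le : ∀ (P : Subgroup S), ∀ φ ∈ Hom P, ∀ x : ↥P, φ x ∈ S₀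
  /-- All morphisms are injective. -/
  inj : ∀ (P : Subgroup S), ∀ φ ∈ Hom P, Function.Injective φ
  /-- All conjugation maps by elements of `S₀` are morphisms
  (so the fusion system contains `F_{S₀}(S₀)`). -/
  conj_mem : ∀ g ∈ S₀, ∀ P : Subgroup S, P ≤ S₀ →
      (MulAut.conj g).toMonoidHom.comp P.subtype ∈ Hom P
  /-- Morphisms are closed under composition. -/
  comp_mem : ∀ (P Q : Subgroup S) (φ : ↥P →* S) (hQ : ∀ x : ↥P, φ x ∈ Q),
      φ ∈ Hom P → ∀ ψ ∈ Hom Q, ψ.comp (φ.codRestrict Q hQ) ∈ Hom P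
  /-- Morphisms are closed under restriction. -/
  restrict_mem : ∀ (P P' : Subgroup S) (h : P' ≤ P), ∀ φ ∈ Hom P,
      φ.comp (Subgroup.inclusion h) ∈ Hom P'
  /-- Inverses of isomorphisms in the system are in the system. -/
  inv_mem : ∀ (P Q : Subgroup S) (e : ↥P ≃* ↥Q),
      Q.subtype.comp e.toMonoidHom ∈ Hom P →
      P.subtype.comp e.symm.toMonoidHom ∈ Hom Q

namespace FusionSystemOn

variable {S : Type*} [Group S] {S₀ : Subgroup S}

/-- `Aut_F(P)`, as a subgroup of the automorphism group of `P`. -/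
def AutF (F : FusionSystemOn S S₀) (P : Subgroup S) (hP : P ≤ S₀) :
    Subgroup (MulAut ↥P) where
  carrier := {α | P.subtype.comp α.toMonoidHom ∈ F.Hom P}
  one_mem' := by
    have h := F.conj_mem 1 S₀.one_mem P hP
    have : (MulAut.conj (1 : S)).toMonoidHom.comp P.subtype
        = P.subtype.comp (1 : MulAut ↥P).toMonoidHom := by
      ext x; simp
    rwa [this] at h
  mul_mem' := by
    intro a b ha hb
    have hQ : ∀ x : ↥P, (P.subtype.comp b.toMonoidHom) x ∈ P := fun x => (b x).2
    have h := F.comp_mem P P (P.subtype.comp b.toMonoidHom) hQ hb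
      (P.subtype.comp a.toMonoidHom) ha
    have heq : (P.subtype.comp a.toMonoidHom).comp
        ((P.subtype.comp b.toMonoidHom).codRestrict P hQ)
        = P.subtype.comp (a * b).toMonoidHom := by
      ext x; rfl
    rwa [heq] at h
  inv_mem' := by
    intro a ha
    exact F.inv_mem P P (a : ↥P ≃* ↥P) ha

/-- `Aut_{S₀}(P)`: the automorphisms of `P` induced by conjugation by elements of
`N_{S₀}(P)`. -/
def AutSub (S₀ : Subgroup S) (P : Subgroup S) : Subgroup (MulAut ↥P) where
  carrier := {α | ∃ g ∈ S₀ ⊓ Subgroup.normalizer (P : Set S), ∀ x : ↥P, ((α x : ↥P) : S) = g * x * g⁻¹}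
  one_mem' := ⟨1, one_mem _, by simp⟩
  mul_mem' := by
    rintro a b ⟨g, hg, hga⟩ ⟨k, hk, hkb⟩
    refine ⟨g * k, mul_mem hg hk, fun x => ?_⟩
    have : ((a (b x) : ↥P) : S) = g * (b x) * g⁻¹ := hga (b x)
    rw [show ((a * b) x) = a (b x) from rfl, this, hkb x]
    group
  inv_mem' := by
    rintro a ⟨g, hg, hga⟩
    refine ⟨g⁻¹, (S₀ ⊓ Subgroup.normalizer (P : Set S)).inv_mem hg, fun x => ?_⟩
    have h := hga (a⁻¹ x)
    rw [show a ((a⁻¹ : MulAut ↥P) x) = x from MulAut.apply_inv_self _ a x] at h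
    rw [h]; group

/-- `P` is fully normalized in the fusion system `F` over `S₀`: the normalizer
`N_{S₀}(P)` has maximal order among `N_{S₀}(Q)` for `Q` `F`-isomorphic to `P`. -/
def FullyNormalized (F : FusionSystemOn S S₀) (P : Subgroup S) : Prop :=
  ∀ (Q : Subgroup S) (e : ↥P ≃* ↥Q), Q.subtype.comp e.toMonoidHom ∈ F.Hom P →
    Nat.card ↥(S₀ ⊓ Subgroup.normalizer (Q : Set S)) ≤ Nat.card ↥(S₀ ⊓ Subgroup.normalizer (P : Set S))

/-- `P` is fully automized in `F`: `Aut_{S₀}(P)` is a Sylow `p`-subgroup of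
`Aut_F(P)`. -/
def FullyAutomized (p : ℕ) (F : FusionSystemOn S S₀) (P : Subgroup S)
    (hP : P ≤ S₀) : Prop :=
  ¬ p ∣ ((AutSub S₀ P).subgroupOf (F.AutF P hP)).index

/-- `Q` is receptive in `F`: every `F`-isomorphism `e : P → Q` extends to any subgroup
`R` with `P ≤ R` and `R` contained in the subgroup `N_e ≤ N_{S₀}(P)` of elements whose
conjugation action is transported by `e` into `Aut_{S₀}(Q)`. -/
def Receptive (F : FusionSystemOn S S₀) (Q : Subgroup S) : Prop :=
  ∀ (P : Subgroup S) (e : ↥P ≃* ↥Q), Q.subtype.comp e.toMonoidHom ∈ F.Hom P →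
  ∀ (R : Subgroup S) (hPR : P ≤ R),
    (∀ g ∈ R, g ∈ S₀ ∧ g ∈ Subgroup.normalizer (P : Set S) ∧ ∃ h ∈ S₀ ⊓ Subgroup.normalizer (Q : Set S),
      ∀ (x : ↥P) (hgx : (g * x * g⁻¹ : S) ∈ P),
        ((e ⟨g * x * g⁻¹, hgx⟩ : ↥Q) : S) = h * (e x) * h⁻¹) →
    ∃ ψ ∈ F.Hom R, ∀ x : ↥P, ψ ⟨(x : S), hPR x.2⟩ = ((e x : ↥Q) : S)

/-- Saturation: every fully normalized subgroup is fully automized and receptive. -/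
def Saturated (p : ℕ) (F : FusionSystemOn S S₀) : Prop :=
  ∀ (P : Subgroup S) (hP : P ≤ S₀), F.FullyNormalized P →
    F.FullyAutomized p P hP ∧ F.Receptive P

/-- `F₀` (over `S₀`) is weakly normal in `F` (over `S`): `F₀ ⊆ F`, `S₀` is strongly
closed in `F`, `F₀` is saturated, and `F₀` is `F`-invariant: for any `φ ∈ Hom_F(Q,S₀)`
and `ψ ∈ Hom_{F₀}(P,Q)` with `P ≤ Q ≤ S₀`, the conjugate `φ ∘ ψ ∘ (φ|_P)⁻¹` lies in
`F₀`. -/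
def WeaklyNormal (p : ℕ) (F : FusionSystemOn S (⊤ : Subgroup S))
    (F₀ : FusionSystemOn S S₀) : Prop :=
  (∀ P : Subgroup S, F₀.Hom P ⊆ F.Hom P) ∧
  (∀ (P : Subgroup S), P ≤ S₀ → ∀ φ ∈ F.Hom P, ∀ x : ↥P, φ x ∈ S₀) ∧
  F₀.Saturated p ∧
  (∀ (Q : Subgroup S), Q ≤ S₀ → ∀ φ ∈ F.Hom Q, (∀ x : ↥Q, φ x ∈ S₀) →
   ∀ (P : Subgroup S) (hPQ : P ≤ Q), ∀ ψ ∈ F₀.Hom P, ∀ (hψQ : ∀ x : ↥P, ψ x ∈ Q)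
     (hinj : Function.Injective (φ.comp (Subgroup.inclusion hPQ))),
     ((φ.comp (ψ.codRestrict Q hψQ)).comp
         (MonoidHom.ofInjective hinj).symm.toMonoidHom)
       ∈ F₀.Hom (φ.comp (Subgroup.inclusion hPQ)).range)

end FusionSystemOn

namespace FusionSystemOn

section MoreHelpers

variable {S : Type*} [Group S] {S₀ : Subgroup S}

lemma isoTrans (G : FusionSystemOn S S₀) {P Q R : Subgroup S} (u : ↥P ≃* ↥Q) (v : ↥Q ≃* ↥R)
    (hu : Q.subtype.comp u.toMonoidHom ∈ G.Hom P)
    (hv : R.subtype.comp v.toMonoidHom ∈ G.Hom Q) :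
    R.subtype.comp (u.trans v).toMonoidHom ∈ G.Hom P := by
  have hQ : ∀ x : ↥P, (Q.subtype.comp u.toMonoidHom) x ∈ Q := fun x => (u x).2
  have h := G.comp_mem P Q _ hQ hu _ hv
  have heq : (R.subtype.comp v.toMonoidHom).comp
      ((Q.subtype.comp u.toMonoidHom).codRestrict Q hQ)
      = R.subtype.comp (u.trans v).toMonoidHom := by
    ext x; rfl
  rwa [heq] at h

lemma idIso (G : FusionSystemOn S S₀) (P : Subgroup S) (hP : P ≤ S₀) :
    P.subtype.comp (MulEquiv.refl ↥P).toMonoidHom ∈ G.Hom P := by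
  have h := G.conj_mem 1 S₀.one_mem P hP
  have heq : (MulAut.conj (1 : S)).toMonoidHom.comp P.subtype
      = P.subtype.comp (MulEquiv.refl ↥P).toMonoidHom := by
    ext x; simp
  rwa [heq] at h

lemma autSub_le (G : FusionSystemOn S S₀) {T' P : Subgroup S} (hT' : T' ≤ S₀) (hP : P ≤ S₀) :
    AutSub T' P ≤ G.AutF P hP := by
  rintro α ⟨g, hg, hga⟩
  have h := G.conj_mem g (hT' (Subgroup.mem_inf.mp hg).1) P hP
  have heq : (MulAut.conj g).toMonoidHom.comp P.subtype
      = P.subtype.comp α.toMonoidHom := by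
    ext x; exact (hga x).symm
  show P.subtype.comp α.toMonoidHom ∈ G.Hom P
  rwa [heq] at h

lemma autSub_pow_apply {P : Subgroup S} (c : MulAut ↥P) (g : S)
    (hc : ∀ x : ↥P, ((c x : ↥P) : S) = g * x * g⁻¹) :
    ∀ (k : ℕ) (x : ↥P), (((c ^ k) x : ↥P) : S) = g ^ k * x * (g ^ k)⁻¹ := by
  intro k
  induction k with
  | zero => intro x; simp
  | succ n ih =>
    intro x
    have h1 : c ^ (n + 1) = c * c ^ n := by rw [pow_succ']
    rw [h1]
    show ((c ((c ^ n) x) : ↥P) : S) = _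
    rw [hc ((c ^ n) x), ih x, pow_succ']
    group

lemma isPGroup_autSub {p : ℕ} [Fact p.Prime] (hS : IsPGroup p S) (T' P : Subgroup S) :
    IsPGroup p ↥(AutSub T' P) := by
  intro c
  obtain ⟨g, hg, hga⟩ := c.2
  obtain ⟨n, hn⟩ := hS g
  refine ⟨n, ?_⟩
  have key : (c : MulAut ↥P) ^ (p ^ n) = 1 := by
    refine DFunLike.ext _ _ fun x => ?_
    have h0 := autSub_pow_apply (c : MulAut ↥P) g hga (p ^ n) x
    rw [hn] at h0
    simp only [one_mul, inv_one, mul_one] at h0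
    exact Subtype.ext h0
  exact Subtype.ext (by rw [SubmonoidClass.coe_pow]; exact key)

/-- Conjugation automorphism of a subgroup by a normalizing element. -/
def conjAut {Q : Subgroup S} {g : S} (hg : g ∈ Subgroup.normalizer (Q : Set S)) : MulAut ↥Q where
  toFun x := ⟨g * x * g⁻¹, (Subgroup.mem_normalizer_iff.mp hg (x : S)).mp x.2⟩
  invFun x := ⟨g⁻¹ * x * g, by
    have := (Subgroup.mem_normalizer_iff.mp ((Subgroup.normalizer (Q : Set S)).inv_mem hg) (x : S)).mp x.2
    simpa using this⟩
  left_inv x := Subtype.ext (by simp only []; group)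
  right_inv x := Subtype.ext (by simp only []; group)
  map_mul' x y := Subtype.ext (by push_cast; group)

lemma conjAut_mem_autSub {T' Q : Subgroup S} {g : S} (hgT : g ∈ T') (hg : g ∈ Subgroup.normalizer (Q : Set S)) :
    conjAut hg ∈ AutSub T' Q :=
  ⟨g, Subgroup.mem_inf.mpr ⟨hgT, hg⟩, fun _ => rfl⟩

lemma congr_mem_autF (F : FusionSystemOn S (⊤ : Subgroup S)) {P Q : Subgroup S}
    (e : ↥P ≃* ↥Q) (he : Q.subtype.comp e.toMonoidHom ∈ F.Hom P)
    {α : MulAut ↥P} (hα : α ∈ F.AutF P le_top) :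
    (MulAut.congr e) α ∈ F.AutF Q le_top := by
  have h1 : P.subtype.comp e.symm.toMonoidHom ∈ F.Hom Q := F.inv_mem P Q e he
  have t1 : Q.subtype.comp ((α : ↥P ≃* ↥P).trans e).toMonoidHom ∈ F.Hom P :=
    F.isoTrans (α : ↥P ≃* ↥P) e hα he
  have t2 := F.isoTrans e.symm ((α : ↥P ≃* ↥P).trans e) h1 t1
  exact t2

/-- `F`-invariance of `F₀`: transport of `F₀`-automorphisms along `F`-isomorphisms. -/
lemma conj_mem_aut₀ {p : ℕ} (F : FusionSystemOn S (⊤ : Subgroup S))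
    (F₀ : FusionSystemOn S S₀) (hWN : WeaklyNormal p F F₀)
    {Q P : Subgroup S} (hQ : Q ≤ S₀) (hP : P ≤ S₀) (e : ↥Q ≃* ↥P)
    (he : P.subtype.comp e.toMonoidHom ∈ F.Hom Q)
    {β : MulAut ↥Q} (hβ : β ∈ F₀.AutF Q hQ) :
    (MulAut.congr e) β ∈ F₀.AutF P hP := by
  obtain ⟨hsub, hstrong, hsat, hinvar⟩ := hWN
  have hφS₀ : ∀ x : ↥Q, (P.subtype.comp e.toMonoidHom) x ∈ S₀ := fun x => hP (e x).2
  have hψQ : ∀ x : ↥Q, (Q.subtype.comp β.toMonoidHom) x ∈ Q := fun x => (β x).2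
  have hinjφ : Function.Injective (P.subtype.comp e.toMonoidHom) :=
    Subtype.coe_injective.comp e.injective
  have hinj0 : Function.Injective
      ((P.subtype.comp e.toMonoidHom).comp (Subgroup.inclusion (le_refl Q))) :=
    fun a b hab => hinjφ hab
  have key := hinvar Q hQ (P.subtype.comp e.toMonoidHom) he hφS₀ Q (le_refl Q)
    (Q.subtype.comp β.toMonoidHom) hβ hψQ hinj0
  set R := ((P.subtype.comp e.toMonoidHom).comp (Subgroup.inclusion (le_refl Q))).range with hR
  have hPR : P ≤ R := by
    intro x hx
    refine MonoidHom.mem_range.mpr ⟨e.symm ⟨x, hx⟩, ?_⟩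
    show ((e (e.symm ⟨x, hx⟩) : ↥P) : S) = x
    rw [MulEquiv.apply_symm_apply]
  have hres := F₀.restrict_mem R P hPR _ key
  show P.subtype.comp ((MulAut.congr e) β).toMonoidHom ∈ F₀.Hom P
  have heq : ((((P.subtype.comp e.toMonoidHom).comp
        ((Q.subtype.comp β.toMonoidHom).codRestrict Q hψQ)).comp
        (MonoidHom.ofInjective hinj0).symm.toMonoidHom).comp (Subgroup.inclusion hPR))
      = P.subtype.comp ((MulAut.congr e) β).toMonoidHom := by
    ext x
    have hsymm : (MonoidHom.ofInjective hinj0).symm (Subgroup.inclusion hPR x)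
        = e.symm x := by
      rw [MulEquiv.symm_apply_eq]
      refine Subtype.ext ?_
      show (x : S) = ((e (e.symm x) : ↥P) : S)
      rw [MulEquiv.apply_symm_apply]
    show (P.subtype.comp e.toMonoidHom)
        (((Q.subtype.comp β.toMonoidHom).codRestrict Q hψQ)
          ((MonoidHom.ofInjective hinj0).symm (Subgroup.inclusion hPR x))) = _
    rw [hsymm]
    rfl
  rwa [heq] at hres

lemma psi_normalizes [Finite S] {Q P R : Subgroup S} (hQR : Q ≤ R) (ψ : ↥R →* S)
    (e : ↥Q ≃* ↥P) (hcomp : ∀ x : ↥Q, ψ (Subgroup.inclusion hQR x) = ((e x : ↥P) : S))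
    (g : ↥R) (hg : (g : S) ∈ Subgroup.normalizer (Q : Set S)) : ψ g ∈ Subgroup.normalizer (P : Set S) := by
  apply mem_normalizer_of_conj_mem
  intro y hy
  obtain ⟨x, hx⟩ : ∃ x : ↥Q, ((e x : ↥P) : S) = y := ⟨e.symm ⟨y, hy⟩, by simp⟩
  rw [← hx, ← hcomp x]
  have hmem : (g : S) * (x : S) * (g : S)⁻¹ ∈ Q :=
    (Subgroup.mem_normalizer_iff.mp hg (x : S)).mp x.2
  have key : ψ g * ψ (Subgroup.inclusion hQR x) * (ψ g)⁻¹
      = ψ (Subgroup.inclusion hQR ⟨_, hmem⟩) := by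
    have h1 : (g * Subgroup.inclusion hQR x * g⁻¹ : ↥R) = Subgroup.inclusion hQR ⟨_, hmem⟩ :=
      Subtype.ext rfl
    rw [← h1, map_mul, map_mul, map_inv]
  rw [key, hcomp ⟨_, hmem⟩]
  exact (e ⟨_, hmem⟩).2

/-- The extension lemma: a morphism onto a fully normalized subgroup extends to
the full normalizer after adjustment. -/
lemma extension_lemma {p : ℕ} [Fact p.Prime] [Finite S] (hS : IsPGroup p S)
    (F : FusionSystemOn S (⊤ : Subgroup S)) (hFsat : F.Saturated p)
    {P Q : Subgroup S} (hPfn : F.FullyNormalized P)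
    (e : ↥Q ≃* ↥P) (he : P.subtype.comp e.toMonoidHom ∈ F.Hom Q) :
    ∃ ψ ∈ F.Hom ((⊤ : Subgroup S) ⊓ Subgroup.normalizer (Q : Set S)),
      ∀ x : ↥((⊤ : Subgroup S) ⊓ Subgroup.normalizer (Q : Set S)), ψ x ∈ Subgroup.normalizer (P : Set S) := by
  obtain ⟨hfa, hrec⟩ := hFsat P le_top hPfn
  set A := F.AutF P le_top with hA
  set T := AutSub (⊤ : Subgroup S) P with hT
  have hTle : T ≤ A := autSub_le F le_top le_top
  have hTp : IsPGroup p ↥T := isPGroup_autSub hS ⊤ P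
  have hTi : ¬ p ∣ (T.subgroupOf A).index := hfa
  set D := (AutSub (⊤ : Subgroup S) Q).map (MulAut.congr e).toMonoidHom with hD
  have hDp : IsPGroup p ↥D := (isPGroup_autSub hS ⊤ Q).map _
  have hDle : D ≤ A := by
    rintro _ ⟨c, hc, rfl⟩
    exact congr_mem_autF F e he (autSub_le F le_top le_top hc)
  have hD'p : IsPGroup p ↥(D.subgroupOf A) :=
    hDp.comap_of_injective A.subtype Subtype.coe_injective
  obtain ⟨Syl, hDSyl⟩ := hD'p.exists_le_sylow
  obtain ⟨a, ha⟩ := MulAction.exists_smul_eq (↥A) Syl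
    (toSylow (T.subgroupOf A) (hTp.comap_of_injective A.subtype Subtype.coe_injective) hTi)
  have hconj : ∀ d ∈ D, (a : MulAut ↥P) * d * (a : MulAut ↥P)⁻¹ ∈ T := by
    intro d hd
    have hdA : d ∈ A := hDle hd
    have h1 : (⟨d, hdA⟩ : ↥A) ∈ Syl := hDSyl (by simpa [Subgroup.mem_subgroupOf] using hd)
    have h2 : a * (⟨d, hdA⟩ : ↥A) * a⁻¹ ∈ (a • Syl : Sylow p ↥A) := by
      show a * (⟨d, hdA⟩ : ↥A) * a⁻¹ ∈ (MulAut.conj a • (Syl : Subgroup ↥A) : Subgroup ↥A)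
      exact Subgroup.smul_mem_pointwise_smul _ (MulAut.conj a) _ h1
    rw [ha] at h2
    have h3 : (a * (⟨d, hdA⟩ : ↥A) * a⁻¹ : ↥A) ∈ T.subgroupOf A := h2
    have h4 := Subgroup.mem_subgroupOf.mp h3
    simpa using h4
  set e' : ↥Q ≃* ↥P := e.trans ((a : MulAut ↥P) : ↥P ≃* ↥P) with he'def
  have he' : P.subtype.comp e'.toMonoidHom ∈ F.Hom Q :=
    F.isoTrans e ((a : MulAut ↥P) : ↥P ≃* ↥P) he a.2
  have hQle : Q ≤ (⊤ : Subgroup S) ⊓ Subgroup.normalizer (Q : Set S) := le_inf le_top Subgroup.le_normalizer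
  have hcond : ∀ g ∈ (⊤ : Subgroup S) ⊓ Subgroup.normalizer (Q : Set S),
      g ∈ (⊤ : Subgroup S) ∧ g ∈ Subgroup.normalizer (Q : Set S) ∧
      ∃ h ∈ (⊤ : Subgroup S) ⊓ Subgroup.normalizer (P : Set S),
        ∀ (x : ↥Q) (hgx : (g * x * g⁻¹ : S) ∈ Q),
          ((e' ⟨g * x * g⁻¹, hgx⟩ : ↥P) : S) = h * (e' x) * h⁻¹ := by
    intro g hg
    have hgN : g ∈ Subgroup.normalizer (Q : Set S) := (Subgroup.mem_inf.mp hg).2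
    refine ⟨Subgroup.mem_top g, hgN, ?_⟩
    have hcmem : conjAut hgN ∈ AutSub (⊤ : Subgroup S) Q :=
      conjAut_mem_autSub (Subgroup.mem_top g) hgN
    have hcT : (a : MulAut ↥P) * ((MulAut.congr e) (conjAut hgN)) * (a : MulAut ↥P)⁻¹ ∈ T :=
      hconj _ ⟨conjAut hgN, hcmem, rfl⟩
    obtain ⟨h, hh, hha⟩ := hcT
    refine ⟨h, hh, ?_⟩
    intro x hgx
    have h1 : (⟨g * x * g⁻¹, hgx⟩ : ↥Q) = (conjAut hgN) x := Subtype.ext rfl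
    rw [h1]
    have h2 : e' ((conjAut hgN) x)
        = ((a : MulAut ↥P) * ((MulAut.congr e) (conjAut hgN)) * (a : MulAut ↥P)⁻¹) (e' x) := by
      show e' ((conjAut hgN) x)
        = (a : MulAut ↥P) (((MulAut.congr e) (conjAut hgN)) ((a : MulAut ↥P)⁻¹ (e' x)))
      simp [he'def, MulAut.congr_apply]
    rw [h2]
    exact hha (e' x)
  obtain ⟨ψ, hψ, hψe⟩ := hrec Q e' he' ((⊤ : Subgroup S) ⊓ Subgroup.normalizer (Q : Set S)) hQle hcond
  refine ⟨ψ, hψ, ?_⟩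
  intro x
  exact psi_normalizes hQle ψ e' (fun y => hψe y) x (Subgroup.mem_inf.mp x.2).2

/-- A fully `F`-normalized subgroup of `S₀` is fully `F₀`-normalized. -/
lemma fullyNormalized_of_F {p : ℕ} [Fact p.Prime] [Finite S] (hS : IsPGroup p S)
    (F : FusionSystemOn S (⊤ : Subgroup S)) (hFsat : F.Saturated p)
    (F₀ : FusionSystemOn S S₀) (hWN : WeaklyNormal p F F₀)
    {Q : Subgroup S} (hQfn : F.FullyNormalized Q) :
    F₀.FullyNormalized Q := by
  intro R f hf
  have hfF : R.subtype.comp f.toMonoidHom ∈ F.Hom Q := hWN.1 Q hf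
  have hfsymm : Q.subtype.comp f.symm.toMonoidHom ∈ F.Hom R := F.inv_mem Q R f hfF
  obtain ⟨ψ, hψ, hψnorm⟩ := extension_lemma hS F hFsat hQfn f.symm hfsymm
  have hR₀R' : S₀ ⊓ Subgroup.normalizer (R : Set S) ≤ (⊤ : Subgroup S) ⊓ Subgroup.normalizer (R : Set S) :=
    inf_le_inf_right _ le_top
  have hres := F.restrict_mem _ _ hR₀R' ψ hψ
  have hψ₀S₀ : ∀ x : ↥(S₀ ⊓ Subgroup.normalizer (R : Set S)),
      (ψ.comp (Subgroup.inclusion hR₀R')) x ∈ S₀ :=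
    hWN.2.1 _ inf_le_left _ hres
  have hinj : Function.Injective (ψ.comp (Subgroup.inclusion hR₀R')) :=
    F.inj _ _ hres
  have hmap : ∀ x : ↥(S₀ ⊓ Subgroup.normalizer (R : Set S)),
      (ψ.comp (Subgroup.inclusion hR₀R')) x ∈ S₀ ⊓ Subgroup.normalizer (Q : Set S) :=
    fun x => Subgroup.mem_inf.mpr ⟨hψ₀S₀ x, hψnorm (Subgroup.inclusion hR₀R' x)⟩
  have hembed : Function.Injective
      (fun x : ↥(S₀ ⊓ Subgroup.normalizer (R : Set S)) =>
        (⟨(ψ.comp (Subgroup.inclusion hR₀R')) x, hmap x⟩ : ↥(S₀ ⊓ Subgroup.normalizer (Q : Set S)))) :=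
    fun a b hab => hinj (congrArg Subtype.val hab)
  exact Nat.card_le_card_of_injective _ hembed

end MoreHelpers

end FusionSystemOn


/-- `O^p(G)`: the smallest normal subgroup of `G` with quotient a `p`-group. -/
def pResidual (p : ℕ) (G : Type*) [Group G] : Subgroup G :=
  ⨅ N ∈ {N : Subgroup G | N.Normal ∧ ∀ g : G, ∃ n : ℕ, g ^ p ^ n ∈ N}, N

open FusionSystemOn in
/-- Lemma 4.1: Let `F` be a saturated fusion system over a finite
`p`-group `S` and `F₀` a weakly normal subsystem of `F` over `S₀ ≤ S`.
If `O^p(Aut_F(S₀)) ≤ Aut_{F₀}(S₀)`, then `O^p(Aut_F(P)) ≤ Aut_{F₀}(P)` for all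
`P ≤ S₀`. -/
theorem stmt11 {S : Type*} [Group S] [Finite S] (p : ℕ) [Fact p.Prime]
    (hS : IsPGroup p S) (S₀ : Subgroup S)
    (F : FusionSystemOn S (⊤ : Subgroup S)) (hFsat : F.Saturated p)
    (F₀ : FusionSystemOn S S₀) (hWN : WeaklyNormal p F F₀)
    (hS₀ : (pResidual p ↥(F.AutF S₀ le_top)).map (F.AutF S₀ le_top).subtype
      ≤ F₀.AutF S₀ le_rfl) :
    ∀ (P : Subgroup S) (hP : P ≤ S₀),
      (pResidual p ↥(F.AutF P le_top)).map (F.AutF P le_top).subtype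
        ≤ F₀.AutF P hP := by
  classical
  obtain ⟨hsub, hstrong, hsat₀, hinvar⟩ := hWN
  have hWN' : WeaklyNormal p F F₀ := ⟨hsub, hstrong, hsat₀, hinvar⟩
  -- the key elementwise statement, proved by downward induction on `|P|`
  have main : ∀ k : ℕ, ∀ P : Subgroup S, ∀ hP : P ≤ S₀,
      Nat.card ↥S₀ - Nat.card ↥P = k →
      ∀ α ∈ F.AutF P le_top, ∃ n : ℕ,
        P.subtype.comp ((α ^ p ^ n : MulAut ↥P)).toMonoidHom ∈ F₀.Hom P := by
    intro k
    induction k using Nat.strong_induction_on with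
    | _ k IH =>
      intro P hP hk α hα
      by_cases hPS : P = S₀
      · -- base case `P = S₀`
        subst hPS
        obtain ⟨n, hn⟩ := exists_pow_mem_biInf (M := ↥(F.AutF P le_top)) (p := p)
          ⟨α, hα⟩ (pResidual p ↥(F.AutF P le_top)) rfl
        refine ⟨n, ?_⟩
        have hmem : α ^ p ^ n ∈
            (pResidual p ↥(F.AutF P le_top)).map (F.AutF P le_top).subtype := by
          exact ⟨(⟨α, hα⟩ : ↥(F.AutF P le_top)) ^ p ^ n, hn, by
            show ((⟨α, hα⟩ ^ p ^ n : ↥(F.AutF P le_top)) : MulAut ↥P) = α ^ p ^ n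
            rw [SubmonoidClass.coe_pow]⟩
        exact hS₀ hmem
      · -- inductive step: `P < S₀`
        have hPltS : P < S₀ := lt_of_le_of_ne hP hPS
        have hcard : Nat.card ↥P < Nat.card ↥S₀ := card_lt_of_lt' hPltS
        have IH' : ∀ Q : Subgroup S, Q ≤ S₀ → Nat.card ↥P < Nat.card ↥Q →
            ∀ β ∈ F.AutF Q le_top, ∃ n : ℕ,
              Q.subtype.comp ((β ^ p ^ n : MulAut ↥Q)).toMonoidHom ∈ F₀.Hom Q := by
          intro Q hQ hcardQ β hβ
          refine IH (Nat.card ↥S₀ - Nat.card ↥Q) ?_ Q hQ rfl β hβ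
          rw [← hk]
          exact Nat.sub_lt_sub_left hcard hcardQ
        -- choose a fully `F`-normalized representative of the `F`-class of `P`
        haveI : Finite (Subgroup S) :=
          Finite.of_injective (fun H : Subgroup S => (H : Set S)) SetLike.coe_injective
        haveI : Nonempty {Q : Subgroup S //
            ∃ u : ↥P ≃* ↥Q, Q.subtype.comp u.toMonoidHom ∈ F.Hom P} :=
          ⟨⟨P, MulEquiv.refl ↥P, FusionSystemOn.idIso F P le_top⟩⟩
        obtain ⟨⟨Q, u, hu⟩, hmax⟩ := Finite.exists_max
          (fun c : {Q : Subgroup S //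
              ∃ u : ↥P ≃* ↥Q, Q.subtype.comp u.toMonoidHom ∈ F.Hom P} =>
            Nat.card ↥((⊤ : Subgroup S) ⊓ Subgroup.normalizer ((c : Subgroup S) : Set S)))
        have hQS₀ : Q ≤ S₀ := by
          intro y hy
          have h0 : (Q.subtype.comp u.toMonoidHom) (u.symm ⟨y, hy⟩) ∈ S₀ :=
            hstrong P hP _ hu _
          simpa using h0
        have hQfn : F.FullyNormalized Q := by
          intro R v hv
          exact hmax ⟨R, u.trans v, F.isoTrans u v hu hv⟩
        have hcardPQ : Nat.card ↥P = Nat.card ↥Q := Nat.card_congr u.toEquiv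
        have hQneS₀ : Q ≠ S₀ := by
          intro h
          rw [h] at hcardPQ
          rw [hcardPQ] at hcard
          exact lt_irrefl _ hcard
        -- `Good Q` via the Frattini argument
        have hGoodQ : ∀ β ∈ F.AutF Q le_top, ∃ n : ℕ,
            Q.subtype.comp ((β ^ p ^ n : MulAut ↥Q)).toMonoidHom ∈ F₀.Hom Q := by
          have hQfn₀ : F₀.FullyNormalized Q :=
            FusionSystemOn.fullyNormalized_of_F hS F hFsat F₀ hWN' hQfn
          have hfa₀ : ¬ p ∣ ((FusionSystemOn.AutSub S₀ Q).subgroupOf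
              (F₀.AutF Q hQS₀)).index := (hsat₀ Q hQS₀ hQfn₀).1
          have hA₀A : F₀.AutF Q hQS₀ ≤ F.AutF Q le_top := fun x hx => hsub Q hx
          have hT₀A₀ : FusionSystemOn.AutSub S₀ Q ≤ F₀.AutF Q hQS₀ :=
            FusionSystemOn.autSub_le F₀ le_rfl hQS₀
          have hT₀p : IsPGroup p ↥(FusionSystemOn.AutSub S₀ Q) :=
            FusionSystemOn.isPGroup_autSub hS S₀ Q
          have hconjA : ∀ a ∈ F.AutF Q le_top, ∀ c ∈ F₀.AutF Q hQS₀,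
              a * c * a⁻¹ ∈ F₀.AutF Q hQS₀ := by
            intro a ha' c hc
            have h0 := FusionSystemOn.conj_mem_aut₀ F F₀ hWN' hQS₀ hQS₀
              ((a : MulAut ↥Q) : ↥Q ≃* ↥Q) ha' hc
            have heq : (MulAut.congr ((a : MulAut ↥Q) : ↥Q ≃* ↥Q)) c = a * c * a⁻¹ := by
              refine DFunLike.ext _ _ fun x => rfl
            rwa [heq] at h0
          intro β hβ
          -- conjugate `Aut_{S₀}(Q)` back into itself
          set T₁ := (FusionSystemOn.AutSub S₀ Q).map (MulAut.conj β).toMonoidHom with hT₁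
          have hT₁A₀ : T₁ ≤ F₀.AutF Q hQS₀ := by
            rintro _ ⟨t, ht, rfl⟩
            exact hconjA β hβ t (hT₀A₀ ht)
          have hT₁p : IsPGroup p ↥T₁ := hT₀p.map _
          have hidx₁ : ¬ p ∣ (T₁.subgroupOf (F₀.AutF Q hQS₀)).index := by
            have hcards : Nat.card ↥T₁ = Nat.card ↥(FusionSystemOn.AutSub S₀ Q) := by
              refine (Nat.card_congr ?_).symm
              exact (Subgroup.equivMapOfInjective _ _ (MulAut.conj β).injective).toEquiv
            have h1 := Subgroup.card_mul_index
              ((FusionSystemOn.AutSub S₀ Q).subgroupOf (F₀.AutF Q hQS₀))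
            have h2 := Subgroup.card_mul_index (T₁.subgroupOf (F₀.AutF Q hQS₀))
            have hc1 : Nat.card ↥((FusionSystemOn.AutSub S₀ Q).subgroupOf (F₀.AutF Q hQS₀))
                = Nat.card ↥(FusionSystemOn.AutSub S₀ Q) :=
              Nat.card_congr (Subgroup.subgroupOfEquivOfLe hT₀A₀).toEquiv
            have hc2 : Nat.card ↥(T₁.subgroupOf (F₀.AutF Q hQS₀)) = Nat.card ↥T₁ :=
              Nat.card_congr (Subgroup.subgroupOfEquivOfLe hT₁A₀).toEquiv
            have hpos : 0 < Nat.card ↥(FusionSystemOn.AutSub S₀ Q) := Nat.card_pos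
            have hEq : (T₁.subgroupOf (F₀.AutF Q hQS₀)).index
                = ((FusionSystemOn.AutSub S₀ Q).subgroupOf (F₀.AutF Q hQS₀)).index := by
              have := h1.trans h2.symm
              rw [hc1, hc2, hcards] at this
              exact (Nat.eq_of_mul_eq_mul_left hpos this.symm)
            rw [hEq]
            exact hfa₀
          obtain ⟨b, hbA₀, hbconj⟩ := sylow_conj_in hT₁A₀ hT₀A₀ hT₁p hT₀p hidx₁ hfa₀
          set γ := b * β with hγdef
          have hγA : γ ∈ F.AutF Q le_top := (F.AutF Q le_top).mul_mem (hA₀A hbA₀) hβ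
          have hγT₀ : ∀ c ∈ FusionSystemOn.AutSub S₀ Q,
              γ * c * γ⁻¹ ∈ FusionSystemOn.AutSub S₀ Q := by
            intro c hc
            have h1 : β * c * β⁻¹ ∈ T₁ := ⟨c, hc, rfl⟩
            have h2 := (hbconj _).mp h1
            have h3 : b * (β * c * β⁻¹) * b⁻¹ = γ * c * γ⁻¹ := by
              rw [hγdef]; group
            rwa [h3] at h2
          -- extend `γ` to `N₀ := S₀ ⊓ N(Q)` by receptivity
          have hrecQ : F.Receptive Q := (hFsat Q le_top hQfn).2
          set N₀ := S₀ ⊓ Subgroup.normalizer (Q : Set S) with hN₀def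
          have hQN₀ : Q ≤ N₀ := le_inf hQS₀ Subgroup.le_normalizer
          have hcond : ∀ g ∈ N₀, g ∈ (⊤ : Subgroup S) ∧ g ∈ Subgroup.normalizer (Q : Set S) ∧
              ∃ h ∈ (⊤ : Subgroup S) ⊓ Subgroup.normalizer (Q : Set S),
                ∀ (x : ↥Q) (hgx : (g * x * g⁻¹ : S) ∈ Q),
                  (((γ : MulAut ↥Q) ⟨g * x * g⁻¹, hgx⟩ : ↥Q) : S)
                    = h * ((γ : MulAut ↥Q) x) * h⁻¹ := by
            intro g hg
            have hgS₀ : g ∈ S₀ := (Subgroup.mem_inf.mp hg).1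
            have hgN : g ∈ Subgroup.normalizer (Q : Set S) := (Subgroup.mem_inf.mp hg).2
            refine ⟨Subgroup.mem_top g, hgN, ?_⟩
            have hcmem : FusionSystemOn.conjAut hgN ∈ FusionSystemOn.AutSub S₀ Q :=
              FusionSystemOn.conjAut_mem_autSub hgS₀ hgN
            obtain ⟨h, hh, hha⟩ := hγT₀ _ hcmem
            have hhN : h ∈ (⊤ : Subgroup S) ⊓ Subgroup.normalizer (Q : Set S) :=
              Subgroup.mem_inf.mpr ⟨Subgroup.mem_top h, (Subgroup.mem_inf.mp hh).2⟩
            refine ⟨h, hhN, ?_⟩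
            intro x hgx
            have h1 : (⟨g * x * g⁻¹, hgx⟩ : ↥Q) = (FusionSystemOn.conjAut hgN) x :=
              Subtype.ext rfl
            rw [h1]
            have h2 : (γ : MulAut ↥Q) ((FusionSystemOn.conjAut hgN) x)
                = (γ * (FusionSystemOn.conjAut hgN) * γ⁻¹) ((γ : MulAut ↥Q) x) := by
              show (γ : MulAut ↥Q) ((FusionSystemOn.conjAut hgN) x)
                = γ ((FusionSystemOn.conjAut hgN) (γ⁻¹ (γ x)))
              rw [MulAut.inv_apply_self]
            rw [h2]
            exact hha ((γ : MulAut ↥Q) x)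
          obtain ⟨ψ, hψ, hψγ⟩ := hrecQ Q ((γ : MulAut ↥Q) : ↥Q ≃* ↥Q) hγA N₀ hQN₀ hcond
          have hψS₀ : ∀ x : ↥N₀, ψ x ∈ S₀ := hstrong N₀ inf_le_left ψ hψ
          have hψN : ∀ x : ↥N₀, ψ x ∈ Subgroup.normalizer (Q : Set S) := fun x =>
            FusionSystemOn.psi_normalizes hQN₀ ψ ((γ : MulAut ↥Q) : ↥Q ≃* ↥Q)
              (fun y => hψγ y) x (Subgroup.mem_inf.mp x.2).2
          have hψN₀ : ∀ x : ↥N₀, ψ x ∈ N₀ := fun x =>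
            Subgroup.mem_inf.mpr ⟨hψS₀ x, hψN x⟩
          have hψinj : Function.Injective ψ := F.inj N₀ ψ hψ
          have hψ'inj : Function.Injective (ψ.codRestrict N₀ hψN₀) :=
            fun a b hab => hψinj (congrArg Subtype.val hab)
          have hψ'bij := Finite.injective_iff_bijective.mp hψ'inj
          set ψh : MulAut ↥N₀ := MulEquiv.ofBijective (ψ.codRestrict N₀ hψN₀) hψ'bij
            with hψhdef
          have hψhA : ψh ∈ F.AutF N₀ le_top := by
            show N₀.subtype.comp ψh.toMonoidHom ∈ F.Hom N₀
            have heq : N₀.subtype.comp ψh.toMonoidHom = ψ := by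
              ext x; rfl
            rwa [heq]
          have hcardN : Nat.card ↥P < Nat.card ↥N₀ := by
            rw [hcardPQ]
            exact card_lt_of_lt' (lt_normalizer_inf hS hQS₀ hQneS₀)
          obtain ⟨n, hn⟩ := IH' N₀ inf_le_left hcardN ψh hψhA
          have hres := F₀.restrict_mem N₀ Q hQN₀ _ hn
          have heq2 : (N₀.subtype.comp ((ψh ^ p ^ n : MulAut ↥N₀)).toMonoidHom).comp
              (Subgroup.inclusion hQN₀)
              = Q.subtype.comp ((γ ^ p ^ n : MulAut ↥Q)).toMonoidHom := by
            have key : ∀ (k : ℕ) (x : ↥Q),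
                (((ψh ^ k) (Subgroup.inclusion hQN₀ x) : ↥N₀) : S)
                  = (((γ ^ k : MulAut ↥Q) x : ↥Q) : S) := by
              intro k
              induction k with
              | zero => intro x; simp
              | succ m ihm =>
                intro x
                rw [pow_succ', pow_succ']
                show ((ψh ((ψh ^ m) (Subgroup.inclusion hQN₀ x)) : ↥N₀) : S) = _
                have h1 : (ψh ^ m) (Subgroup.inclusion hQN₀ x)
                    = Subgroup.inclusion hQN₀ ((γ ^ m : MulAut ↥Q) x) := Subtype.ext (ihm x)
                rw [h1]
                have h2 : ((ψh (Subgroup.inclusion hQN₀ ((γ ^ m : MulAut ↥Q) x)) : ↥N₀) : S)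
                    = (((γ : MulAut ↥Q) ((γ ^ m : MulAut ↥Q) x) : ↥Q) : S) :=
                  hψγ ((γ ^ m : MulAut ↥Q) x)
                rw [h2]
                rfl
            ext x
            exact key (p ^ n) x
          rw [heq2] at hres
          obtain ⟨c, hc, hceq⟩ := coset_pow hconjA hβ hbA₀ (p ^ n)
          have hβpow : (β : MulAut ↥Q) ^ p ^ n = c⁻¹ * γ ^ p ^ n := by
            rw [hγdef, hceq]
            group
          refine ⟨n, ?_⟩
          show β ^ p ^ n ∈ F₀.AutF Q hQS₀
          rw [hβpow]
          exact (F₀.AutF Q hQS₀).mul_mem ((F₀.AutF Q hQS₀).inv_mem hc) hres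
        -- transport `Good Q` back to `P`
        have hβQ : (MulAut.congr u) α ∈ F.AutF Q le_top :=
          FusionSystemOn.congr_mem_autF F u hu hα
        obtain ⟨n, hn⟩ := hGoodQ _ hβQ
        have husymm : P.subtype.comp u.symm.toMonoidHom ∈ F.Hom Q := F.inv_mem P Q u hu
        have h2 : (MulAut.congr u.symm) (((MulAut.congr u) α) ^ p ^ n) ∈ F₀.AutF P hP :=
          FusionSystemOn.conj_mem_aut₀ F F₀ hWN' hQS₀ hP u.symm husymm hn
        have h3 : (MulAut.congr u.symm) (((MulAut.congr u) α) ^ p ^ n) = α ^ p ^ n := by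
          rw [← map_pow]
          refine DFunLike.ext _ _ fun x => ?_
          simp [MulAut.congr_apply]
        rw [h3] at h2
        exact ⟨n, h2⟩
  -- conclude: the quotient criterion
  intro P hP
  have hKmem : ((F₀.AutF P hP).subgroupOf (F.AutF P le_top)) ∈
      {N : Subgroup ↥(F.AutF P le_top) | N.Normal ∧
        ∀ g : ↥(F.AutF P le_top), ∃ n : ℕ, g ^ p ^ n ∈ N} := by
    constructor
    · constructor
      intro x hx g
      rw [Subgroup.mem_subgroupOf] at hx ⊢
      have h0 := FusionSystemOn.conj_mem_aut₀ F F₀ hWN' hP hP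
        (((g : MulAut ↥P)) : ↥P ≃* ↥P) g.2 hx
      have heq : (MulAut.congr (((g : MulAut ↥P)) : ↥P ≃* ↥P)) (x : MulAut ↥P)
          = ((g * x * g⁻¹ : ↥(F.AutF P le_top)) : MulAut ↥P) := by
        refine DFunLike.ext _ _ fun y => rfl
      rwa [heq] at h0
    · intro g
      obtain ⟨n, hn⟩ := main (Nat.card ↥S₀ - Nat.card ↥P) P hP rfl (g : MulAut ↥P) g.2
      refine ⟨n, ?_⟩
      rw [Subgroup.mem_subgroupOf]
      show ((g ^ p ^ n : ↥(F.AutF P le_top)) : MulAut ↥P) ∈ F₀.AutF P hP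
      rw [SubmonoidClass.coe_pow]
      exact hn
  have h1 : pResidual p ↥(F.AutF P le_top) ≤ (F₀.AutF P hP).subgroupOf (F.AutF P le_top) :=
    iInf_le_of_le _ (iInf_le _ hKmem)
  rintro x ⟨y, hy, rfl⟩
  exact Subgroup.mem_subgroupOf.mp (h1 hy)
end
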